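/- Let f : ℍ → ℍ be a holomorphic map whose iterates f^n converge to ∞ uniformly on compact subsets, and suppose that: (i) (Im f^{n+1}(1) − Im f^n(1))/Re f^n(1) → b for some real b ≠ 0; (ii) the sequence {Im f^n(1)} is eventually of constant (nonzero) sign; and (iii) the sequence {Re f^n(1)} is non-decreasing. Then the sequence {|f^n(1)|} is eventually strictly increasing, and consequently, for the geodesic γ(t) = 1 + t (t ≥ 0), the sequence {d_ℍ(1, π_γ(f^n(1)))} of distances to the projections of the orbit onto γ is eventually strictly increasing, where π_γ(f^n(1)) = |f^n(1)| for all large n. -/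

import Mathlib

open Complex Filter Topology

/-- Pseudo-hyperbolic distance on the right half-plane ℍ = {Re z > 0}. -/
noncomputable def rhoH (z w : ℂ) : ℝ := ‖(z - w) / (z + (starRingEnd ℂ) w)‖

/-- Hyperbolic distance on the right half-plane. -/
noncomputable def dH (z w : ℂ) : ℝ := (1/2) * Real.log ((1 + rhoH z w) / (1 - rhoH z w))

/-- `p` is a hyperbolic projection of `z` onto the curve `γ : [0,∞) → ℍ`. -/
def IsProjH (γ : ℝ → ℂ) (z p : ℂ) : Prop :=
  (∃ t ≥ (0:ℝ), p = γ t) ∧ ∀ t ≥ (0:ℝ), dH z p ≤ dH z (γ t)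

/-- `f` is a hyperbolic holomorphic self-map of the right half-plane with
Denjoy–Wolff point ∞: it preserves ℍ, is holomorphic on ℍ, its iterates tend to ∞
uniformly on compact subsets of ℍ, and `f(z)/z → c` for some `c > 1` as `z → ∞`
within every sector `{|arg z| < φ}`, `φ ∈ (0, π/2)`. -/
def HyperbolicAtInf (f : ℂ → ℂ) : Prop :=
  (∀ z : ℂ, 0 < z.re → 0 < (f z).re) ∧
  DifferentiableOn ℂ f {z : ℂ | 0 < z.re} ∧
  (∀ K : Set ℂ, K ⊆ {z : ℂ | 0 < z.re} → IsCompact K →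
    ∀ M : ℝ, ∃ N : ℕ, ∀ n ≥ N, ∀ z ∈ K, M < ‖f^[n] z‖) ∧
  (∃ c : ℝ, 1 < c ∧ ∀ φ ∈ Set.Ioo (0:ℝ) (Real.pi/2), ∀ ε > (0:ℝ), ∃ R : ℝ,
    ∀ z : ℂ, 0 < z.re → |z.arg| < φ → R < ‖z‖ →
      ‖f z / z - (c:ℂ)‖ < ε)

lemma rho_nonneg (z w : ℂ) : 0 ≤ rhoH z w := norm_nonneg _

lemma rho_real_eq (z : ℂ) (s : ℝ) :
    rhoH z (s : ℂ) = ‖z - s‖ / ‖z + s‖ := by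
  simp [rhoH, map_div₀, Complex.conj_ofReal]

lemma rho_real_lt_one (z : ℂ) (s : ℝ) (hz : 0 < z.re) (hs : 0 < s) :
    rhoH z (s : ℂ) < 1 := by
  rw [rho_real_eq]
  have hne : (z + s) ≠ 0 := by
    intro h
    have : (z + (s:ℂ)).re = 0 := by rw [h]; simp
    simp [Complex.add_re] at this
    linarith
  have hpos : 0 < ‖z + s‖ := norm_pos_iff.mpr hne
  rw [div_lt_one hpos]
  have h2 : (‖z - s‖)^2 < (‖z + s‖)^2 := by
    rw [Complex.sq_norm, Complex.sq_norm, Complex.normSq_apply, Complex.normSq_apply]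
    simp only [Complex.add_re, Complex.add_im, Complex.sub_re, Complex.sub_im,
      Complex.ofReal_re, Complex.ofReal_im, sub_zero]
    nlinarith [mul_pos hz hs]
  exact lt_of_pow_lt_pow_left₀ 2 (norm_nonneg _) h2

/-- Among real points `s > 0`, the pseudo-hyperbolic distance from `z` is minimized
at `s = |z|`. -/
lemma rho_min (z : ℂ) (hz : 0 < z.re) (t : ℝ) (ht : 0 < t) :
    rhoH z ((‖z‖ : ℝ) : ℂ) ≤ rhoH z (t : ℂ) := by
  set r : ℝ := ‖z‖ with hrdef
  have hzne : z ≠ 0 := by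
    intro h; rw [h] at hz; simp at hz
  have hr : 0 < r := norm_pos_iff.mpr hzne
  have hr2 : r ^ 2 = z.re ^ 2 + z.im ^ 2 := by
    rw [hrdef, Complex.sq_norm, Complex.normSq_apply]; ring
  rw [rho_real_eq, rho_real_eq]
  have hden : ∀ s : ℝ, 0 < s → 0 < ‖z + s‖ := by
    intro s hs
    apply norm_pos_iff.mpr
    intro h
    have : (z + (s:ℂ)).re = 0 := by rw [h]; simp
    simp [Complex.add_re] at this
    linarith
  rw [div_le_div_iff₀ (hden r hr) (hden t ht)]
  have hsq : (‖z - r‖ * ‖z + t‖) ^ 2 ≤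
      (‖z - t‖ * ‖z + r‖) ^ 2 := by
    rw [mul_pow, mul_pow, Complex.sq_norm, Complex.sq_norm, Complex.sq_norm, Complex.sq_norm]
    simp only [Complex.normSq_apply, Complex.add_re, Complex.add_im, Complex.sub_re,
      Complex.sub_im, Complex.ofReal_re, Complex.ofReal_im, sub_zero]
    nlinarith [mul_nonneg (mul_nonneg hz.le hr.le) (sq_nonneg (t - r))]
  exact le_of_pow_le_pow_left₀ (by norm_num)
    (mul_nonneg (norm_nonneg _) (norm_nonneg _)) hsq

lemma dH_le_dH (z w1 w2 : ℂ) (h1 : rhoH z w1 ≤ rhoH z w2) (h2 : rhoH z w2 < 1) :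
    dH z w1 ≤ dH z w2 := by
  have h0 : 0 ≤ rhoH z w1 := rho_nonneg z w1
  have hl1 : 0 < 1 - rhoH z w1 := by linarith
  have hl2 : 0 < 1 - rhoH z w2 := by linarith
  have hq : (1 + rhoH z w1) / (1 - rhoH z w1) ≤ (1 + rhoH z w2) / (1 - rhoH z w2) := by
    rw [div_le_div_iff₀ hl1 hl2]; nlinarith
  have hpos : 0 < (1 + rhoH z w1) / (1 - rhoH z w1) := by
    apply div_pos; linarith; exact hl1
  unfold dH
  have := Real.log_le_log hpos hq
  linarith

lemma dH_lt_dH (z w1 w2 : ℂ) (h1 : rhoH z w1 < rhoH z w2) (h2 : rhoH z w2 < 1) :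
    dH z w1 < dH z w2 := by
  have h0 : 0 ≤ rhoH z w1 := rho_nonneg z w1
  have hl1 : 0 < 1 - rhoH z w1 := by linarith
  have hl2 : 0 < 1 - rhoH z w2 := by linarith
  have hq : (1 + rhoH z w1) / (1 - rhoH z w1) < (1 + rhoH z w2) / (1 - rhoH z w2) := by
    rw [div_lt_div_iff₀ hl1 hl2]; nlinarith
  have hpos : 0 < (1 + rhoH z w1) / (1 - rhoH z w1) := by
    apply div_pos; linarith; exact hl1
  unfold dH
  have := Real.log_lt_log hpos hq
  linarith

lemma rho_one_real (r : ℝ) (hr : 1 ≤ r) : rhoH 1 (r : ℂ) = (r - 1) / (r + 1) := by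
  rw [rho_real_eq]
  rw [show (1 : ℂ) - (r : ℝ) = ((1 - r : ℝ) : ℂ) by push_cast; ring,
    show (1 : ℂ) + (r : ℝ) = ((1 + r : ℝ) : ℂ) by push_cast; ring,
    Complex.norm_real, Complex.norm_real, Real.norm_eq_abs, Real.norm_eq_abs]
  rw [abs_of_nonpos (by linarith), abs_of_pos (by linarith)]
  ring_nf

/-- A sequence that increases by at least `c > 0` at each step cannot stay negative. -/
lemma aux_grow (u : ℕ → ℝ) (c : ℝ) (hc : 0 < c)
    (hstep : ∀ n, c ≤ u (n + 1) - u n) (hneg : ∀ n, u n < 0) : False := by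
  have hgrow : ∀ k : ℕ, u 0 + k * c ≤ u k := by
    intro k
    induction k with
    | zero => simp
    | succ k ih =>
      have := hstep k
      push_cast
      push_cast at ih
      linarith
  obtain ⟨k, hk⟩ := exists_nat_gt ((-u 0) / c)
  have h1 := hgrow k
  have h2 : (-u 0) / c * c < (k : ℝ) * c := mul_lt_mul_of_pos_right hk hc
  rw [div_mul_cancel₀ _ hc.ne'] at h2
  linarith [hneg k]

/-- If a sequence eventually increases by at least `c > 0` each step and is eventually
of constant sign, its squares are eventually strictly increasing. -/
lemma aux_sq (u : ℕ → ℝ) (c : ℝ) (hc : 0 < c)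
    (hstep : ∃ N : ℕ, ∀ n ≥ N, c ≤ u (n + 1) - u n)
    (hsign : (∃ N : ℕ, ∀ n ≥ N, 0 < u n) ∨ (∃ N : ℕ, ∀ n ≥ N, u n < 0)) :
    ∃ N : ℕ, ∀ n ≥ N, (u n) ^ 2 < (u (n + 1)) ^ 2 := by
  obtain ⟨N1, h1⟩ := hstep
  rcases hsign with ⟨N2, h2⟩ | ⟨N2, h2⟩
  · refine ⟨max N1 N2, fun n hn => ?_⟩
    have hn1 : N1 ≤ n := le_trans (le_max_left _ _) hn
    have hn2 : N2 ≤ n := le_trans (le_max_right _ _) hn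
    have hs := h1 n hn1
    have hp := h2 n hn2
    nlinarith
  · exfalso
    apply aux_grow (fun k => u (max N1 N2 + k)) c hc
    · intro k
      have h := h1 (max N1 N2 + k) (le_trans (le_max_left _ _) (Nat.le_add_right _ _))
      show c ≤ u (max N1 N2 + (k + 1)) - u (max N1 N2 + k)
      rw [← Nat.add_assoc]
      exact h
    · intro k
      exact h2 _ (le_trans (le_max_right _ _) (Nat.le_add_right _ _))

/-- under conditions (i)–(iii) (satisfied by parabolic maps of
positive hyperbolic step), the sequence {|f^n(1)|} is eventually strictly
increasing; consequently, for the geodesic γ(t) = 1 + t, the projection of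
f^n(1) onto γ is |f^n(1)| for all large n, and the orthogonal speed
{d_ℍ(1, π_γ(f^n(1)))} is eventually strictly increasing. -/
theorem stmt19 (f : ℂ → ℂ)
    (hmap : ∀ z : ℂ, 0 < z.re → 0 < (f z).re)
    (hdiff : DifferentiableOn ℂ f {z : ℂ | 0 < z.re})
    (hconv : ∀ K : Set ℂ, K ⊆ {z : ℂ | 0 < z.re} → IsCompact K →
      ∀ M : ℝ, ∃ N : ℕ, ∀ n ≥ N, ∀ z ∈ K, M < ‖f^[n] z‖)
    (b : ℝ) (hb : b ≠ 0)
    (hi : Tendsto (fun n : ℕ =>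
        ((f^[n+1] 1).im - (f^[n] 1).im) / (f^[n] 1).re) atTop (𝓝 b))
    (hii : (∃ N : ℕ, ∀ n ≥ N, 0 < (f^[n] 1).im) ∨ (∃ N : ℕ, ∀ n ≥ N, (f^[n] 1).im < 0))
    (hiii : Monotone fun n : ℕ => (f^[n] 1).re) :
    (∃ N : ℕ, ∀ n ≥ N, ‖f^[n] 1‖ < ‖f^[n+1] 1‖) ∧
    (∃ N : ℕ, ∀ n ≥ N,
        IsProjH (fun t : ℝ => 1 + (t : ℂ)) (f^[n] 1) ((‖f^[n] 1‖ : ℂ))) ∧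
    (∃ N : ℕ, ∀ n ≥ N,
        dH 1 ((‖f^[n] 1‖ : ℂ)) < dH 1 ((‖f^[n+1] 1‖ : ℂ))) := by
  -- real parts are ≥ 1
  have hre1 : ∀ n : ℕ, 1 ≤ (f^[n] 1).re := by
    intro n
    have := hiii (Nat.zero_le n)
    simpa using this
  have hrepos : ∀ n : ℕ, 0 < (f^[n] 1).re := fun n => lt_of_lt_of_le one_pos (hre1 n)
  -- step estimate from (i)
  obtain ⟨N1, hN1⟩ := Metric.tendsto_atTop.mp hi (|b| / 2) (by positivity)
  -- im² eventually strictly increasing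
  have hsq : ∃ N : ℕ, ∀ n ≥ N, ((f^[n] 1).im) ^ 2 < ((f^[n+1] 1).im) ^ 2 := by
    rcases hb.lt_or_gt with hbneg | hbpos
    · -- b < 0 : apply aux_sq to the negated imaginary parts
      have h := aux_sq (fun n => -(f^[n] 1).im) (-b / 2) (by linarith)
        ?_ ?_
      · obtain ⟨N, hN⟩ := h
        exact ⟨N, fun n hn => by have := hN n hn; simpa [neg_sq] using this⟩
      · refine ⟨N1, fun n hn => ?_⟩
        have hd := hN1 n hn
        rw [Real.dist_eq] at hd
        have habs : |b| = -b := abs_of_neg hbneg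
        rw [habs] at hd
        have hd' := abs_lt.mp hd
        have hre := hrepos n
        have hratio : ((f^[n+1] 1).im - (f^[n] 1).im) / (f^[n] 1).re < b / 2 := by
          linarith [hd'.2]
        have h1 : ((f^[n+1] 1).im - (f^[n] 1).im) < b / 2 * (f^[n] 1).re :=
          (div_lt_iff₀ hre).mp hratio
        have h2 : b / 2 * (f^[n] 1).re ≤ b / 2 := by
          nlinarith [hre1 n]
        linarith
      · rcases hii with ⟨N2, h2⟩ | ⟨N2, h2⟩
        · exact Or.inr ⟨N2, fun n hn => by simpa using neg_neg_of_pos (h2 n hn)⟩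
        · exact Or.inl ⟨N2, fun n hn => by simpa using neg_pos_of_neg (h2 n hn)⟩
    · -- b > 0
      apply aux_sq (fun n => (f^[n] 1).im) (b / 2) (by linarith)
      · refine ⟨N1, fun n hn => ?_⟩
        have hd := hN1 n hn
        rw [Real.dist_eq] at hd
        have habs : |b| = b := abs_of_pos hbpos
        rw [habs] at hd
        have hd' := abs_lt.mp hd
        have hre := hrepos n
        have hratio : b / 2 < ((f^[n+1] 1).im - (f^[n] 1).im) / (f^[n] 1).re := by
          linarith [hd'.1]
        have h1 : b / 2 * (f^[n] 1).re < ((f^[n+1] 1).im - (f^[n] 1).im) :=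
          (lt_div_iff₀ hre).mp hratio
        have h2 : b / 2 ≤ b / 2 * (f^[n] 1).re := by
          nlinarith [hre1 n]
        linarith
      · exact hii
  obtain ⟨N, hN⟩ := hsq
  -- part 1: |f^n(1)| eventually strictly increasing
  have part1 : ∀ n ≥ N, ‖f^[n] 1‖ < ‖f^[n+1] 1‖ := by
    intro n hn
    have him := hN n hn
    have hre : (f^[n] 1).re ≤ (f^[n+1] 1).re := hiii (Nat.le_succ n)
    have habs : (‖f^[n] 1‖) ^ 2 < (‖f^[n+1] 1‖) ^ 2 := by
      rw [Complex.sq_norm, Complex.sq_norm, Complex.normSq_apply, Complex.normSq_apply]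
      nlinarith [hrepos n, hrepos (n+1)]
    exact lt_of_pow_lt_pow_left₀ 2 (norm_nonneg _) habs
  have habs_ge1 : ∀ n : ℕ, 1 ≤ ‖f^[n] 1‖ :=
    fun n => le_trans (hre1 n) (Complex.re_le_norm _)
  refine ⟨⟨N, part1⟩, ⟨0, fun n _ => ?_⟩, ⟨N, fun n hn => ?_⟩⟩
  · -- part 2: projection
    set z := f^[n] 1 with hz
    set r : ℝ := ‖z‖ with hrdef
    constructor
    · exact ⟨r - 1, by linarith [habs_ge1 n], by push_cast; ring⟩
    · intro t ht
      have h1t : (0:ℝ) < 1 + t := by linarith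
      have hcast : (1 : ℂ) + (t : ℝ) = ((1 + t : ℝ) : ℂ) := by push_cast; ring
      simp only [hcast]
      exact dH_le_dH z _ _ (rho_min z (hrepos n) (1 + t) h1t)
        (rho_real_lt_one z (1 + t) (hrepos n) h1t)
  · -- part 3: orthogonal speed strictly increasing
    set r1 : ℝ := ‖f^[n] 1‖
    set r2 : ℝ := ‖f^[n+1] 1‖
    have h12 : r1 < r2 := part1 n hn
    have h1 : 1 ≤ r1 := habs_ge1 n
    have h2 : 1 ≤ r2 := habs_ge1 (n+1)
    apply dH_lt_dH
    · rw [rho_one_real r1 h1, rho_one_real r2 h2]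
      rw [div_lt_div_iff₀ (by linarith) (by linarith)]
      nlinarith
    · rw [rho_one_real r2 h2]
      rw [div_lt_one (by linarith)]
      linarith
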